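/- arXiv:1911.02590 — 6 statements merged into one kernel-verified Lean document; each statement's English description precedes it below -/
import Mathlib

section
/- (Lemma 2, unrolled SGD derivative.) Take learning rate α = 1 and let w_0 : Λ → W be a constant function (the initialization does not depend on λ). Define w_{i+1}(λ) = w_i(λ) − g(λ, w_i(λ)). Then every w_i is differentiable, and for each i and each λ the Fréchet derivative satisfies D w_{i+1}(λ) = −∑_{j=0}^{i} [ ∏_{k=0}^{j−1} ( I − H(λ, w_{i−k}(λ)) ) ] ∘ M(λ, w_{i−j}(λ)), where the product denotes composition of the linear maps taken left-to-right in order of increasing k, the empty product is the identity, and I is the identity map on W. -/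
open Topology

section Aux

variable {E F : Type*} [NormedAddCommGroup E] [NormedSpace ℝ E]
  [NormedAddCommGroup F] [NormedSpace ℝ F]

/-- Chain rule for `l ↦ G (l, u l)` split into partial derivatives. -/
theorem aux_step (G : E × F → F) (hG : Differentiable ℝ G)
    (u : E → F) (hu : Differentiable ℝ u) (l : E) :
    fderiv ℝ (fun l' => G (l', u l')) l =
      (fderiv ℝ (fun x => G (l, x)) (u l)).comp (fderiv ℝ u l) +
        fderiv ℝ (fun l' => G (l', u l)) l := by
  have h1 : HasFDerivAt (fun l' : E => (l', u l'))
      ((ContinuousLinearMap.id ℝ E).prod (fderiv ℝ u l)) l :=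
    HasFDerivAt.prodMk (hasFDerivAt_id l) (hu l).hasFDerivAt
  have h2 : HasFDerivAt (fun l' => G (l', u l'))
      ((fderiv ℝ G (l, u l)).comp ((ContinuousLinearMap.id ℝ E).prod (fderiv ℝ u l))) l :=
    (hG (l, u l)).hasFDerivAt.comp l h1
  have hA : fderiv ℝ (fun x : F => G (l, x)) (u l) =
      (fderiv ℝ G (l, u l)).comp (ContinuousLinearMap.inr ℝ E F) :=
    ((hG (l, u l)).hasFDerivAt.comp (u l) (hasFDerivAt_prodMk_right l (u l))).fderiv
  have hB : fderiv ℝ (fun l' : E => G (l', u l)) l =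
      (fderiv ℝ G (l, u l)).comp (ContinuousLinearMap.inl ℝ E F) :=
    ((hG (l, u l)).hasFDerivAt.comp l (hasFDerivAt_prodMk_left l (u l))).fderiv
  rw [h2.fderiv, hA, hB]
  ext v
  simp only [ContinuousLinearMap.comp_apply, ContinuousLinearMap.add_apply,
    ContinuousLinearMap.prod_apply, ContinuousLinearMap.id_apply,
    ContinuousLinearMap.inl_apply, ContinuousLinearMap.inr_apply]
  rw [← map_add]
  simp

end Aux

/-- Abbreviations for the two Euclidean spaces. -/
abbrev SgdE (m : ℕ) := EuclideanSpace ℝ (Fin m)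

/-- **Lemma 2: derivative of unrolled SGD** (learning rate 1, initialization independent
of the hyperparameters).  `D w_{i+1}(λ) = -∑_{j≤i} [∏_{k<j} (I - H(λ, w_{i-k}(λ)))] ∘
M(λ, w_{i-j}(λ))`, where the product is composition taken left-to-right in increasing `k`. -/
theorem unrolled_sgd_derivative (m n : ℕ)
    (LT : EuclideanSpace ℝ (Fin m) × EuclideanSpace ℝ (Fin n) → ℝ)
    (hLT : ContDiff ℝ 2 LT)
    (g : EuclideanSpace ℝ (Fin m) → EuclideanSpace ℝ (Fin n) → EuclideanSpace ℝ (Fin n))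
    (hg : ∀ l w, g l w = gradient (fun w' => LT (l, w')) w)
    (w : ℕ → EuclideanSpace ℝ (Fin m) → EuclideanSpace ℝ (Fin n))
    (c : EuclideanSpace ℝ (Fin n))
    (hw0 : w 0 = fun _ => c)
    (hrec : ∀ i l, w (i + 1) l = w i l - g l (w i l)) :
    (∀ i, Differentiable ℝ (w i)) ∧
      ∀ (i : ℕ) (l : EuclideanSpace ℝ (Fin m)),
        fderiv ℝ (w (i + 1)) l =
          -(∑ j ∈ Finset.range (i + 1),
              (((List.range j).map (fun k =>
                  (1 : EuclideanSpace ℝ (Fin n) →L[ℝ] EuclideanSpace ℝ (Fin n)) -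
                    fderiv ℝ (g l) (w (i - k) l))).prod).comp
                (fderiv ℝ (fun l' => g l' (w (i - j) l)) l)) := by
  -- the gradient map as a function of both variables
  set G : (SgdE m) × (SgdE n) → (SgdE n) := fun p =>
    (InnerProductSpace.toDual ℝ (SgdE n)).symm ((fderiv ℝ LT p).comp (ContinuousLinearMap.inr ℝ (SgdE m) (SgdE n)))
    with hGdef
  have hgG : ∀ l x, g l x = G (l, x) := by
    intro l x
    rw [hg l x, gradient, hGdef]
    congr 1
    exact (((hLT.differentiable (by norm_num)) (l, x)).hasFDerivAt.comp x
      (hasFDerivAt_prodMk_right l x)).fderiv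
  have hGdiff : Differentiable ℝ G := by
    have h1 : ContDiff ℝ 1 (fderiv ℝ LT) := hLT.fderiv_right (by norm_num)
    have h2 : Differentiable ℝ (fun p : (SgdE m) × (SgdE n) => (fderiv ℝ LT p).comp
        (ContinuousLinearMap.inr ℝ (SgdE m) (SgdE n))) := by
      exact ((ContinuousLinearMap.compL ℝ (SgdE n) ((SgdE m) × (SgdE n)) ℝ).flip
        (ContinuousLinearMap.inr ℝ (SgdE m) (SgdE n))).differentiable.comp
        (h1.differentiable one_ne_zero)
    exact (InnerProductSpace.toDual ℝ (SgdE n)).symm.toContinuousLinearEquiv.differentiable.comp h2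
  -- differentiability of each iterate
  have hwdiff : ∀ i, Differentiable ℝ (w i) := by
    intro i
    induction i with
    | zero => rw [hw0]; exact differentiable_const c
    | succ i ih =>
      have : w (i + 1) = fun l => w i l - G (l, w i l) := by
        funext l; rw [hrec i l, hgG]
      rw [this]
      exact ih.sub (hGdiff.comp (differentiable_id.prodMk ih))
  refine ⟨hwdiff, ?_⟩
  -- one-step recurrence for the derivative
  have hDstep : ∀ i l,
      fderiv ℝ (w (i + 1)) l =
        ((1 : (SgdE n) →L[ℝ] (SgdE n)) - fderiv ℝ (g l) (w i l)).comp (fderiv ℝ (w i) l) -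
          fderiv ℝ (fun l' => g l' (w i l)) l := by
    intro i l
    have hwi1 : w (i + 1) = fun l => w i l - (fun l' => G (l', w i l')) l := by
      funext l; rw [hrec i l, hgG]
    have hgl : g l = fun x => G (l, x) := funext fun x => hgG l x
    have hgl2 : (fun l' => g l' (w i l)) = fun l' => G (l', w i l) :=
      funext fun l' => hgG l' (w i l)
    have hd2 : DifferentiableAt ℝ (fun l' => G (l', w i l')) l :=
      (hGdiff _).comp l (DifferentiableAt.prodMk differentiableAt_id ((hwdiff i) l))
    rw [hwi1, fderiv_fun_sub ((hwdiff i) l) hd2,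
      aux_step G hGdiff (w i) (hwdiff i) l, hgl, hgl2]
    ext v
    simp [ContinuousLinearMap.sub_comp, sub_add_eq_sub_sub]
  -- main induction
  intro i
  induction i with
  | zero =>
    intro l
    rw [hDstep 0 l]
    have h0 : fderiv ℝ (w 0) l = 0 := by rw [hw0]; exact fderiv_const_apply c
    simp [h0, ContinuousLinearMap.one_def]
  | succ i ih =>
    intro l
    rw [hDstep (i + 1) l, ih l]
    conv_rhs => rw [Finset.sum_range_succ']
    have hterm0 : (((List.range 0).map (fun k =>
        (1 : (SgdE n) →L[ℝ] (SgdE n)) - fderiv ℝ (g l) (w (i + 1 - k) l))).prod).comp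
          (fderiv ℝ (fun l' => g l' (w (i + 1 - 0) l)) l) =
        fderiv ℝ (fun l' => g l' (w (i + 1) l)) l := by
      simp [ContinuousLinearMap.one_def]
    have hsucc : ∀ j, (((List.range (j + 1)).map (fun k =>
        (1 : (SgdE n) →L[ℝ] (SgdE n)) - fderiv ℝ (g l) (w (i + 1 - k) l))).prod).comp
          (fderiv ℝ (fun l' => g l' (w (i + 1 - (j + 1)) l)) l) =
        (((1 : (SgdE n) →L[ℝ] (SgdE n)) - fderiv ℝ (g l) (w (i + 1) l)).comp
          (((List.range j).map (fun k =>
            (1 : (SgdE n) →L[ℝ] (SgdE n)) - fderiv ℝ (g l) (w (i - k) l))).prod)).comp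
          (fderiv ℝ (fun l' => g l' (w (i - j) l)) l) := by
      intro j
      rw [List.range_succ_eq_map, List.map_cons, List.prod_cons, List.map_map]
      have hfun : ((fun k => (1 : (SgdE n) →L[ℝ] (SgdE n)) -
            fderiv ℝ (g l) (w (i + 1 - k) l)) ∘ Nat.succ) =
          fun k => (1 : (SgdE n) →L[ℝ] (SgdE n)) - fderiv ℝ (g l) (w (i - k) l) := by
        funext k
        simp [Function.comp, Nat.succ_sub_succ]
      rw [hfun, Nat.succ_sub_succ, Nat.sub_zero]
      rfl
    simp only [hterm0, hsucc]
    rw [ContinuousLinearMap.comp_neg, ContinuousLinearMap.comp_finset_sum, neg_add,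
      sub_eq_add_neg]
    congr 2
end

section
/- (Neumann-SGD, finite unrolling.) Take learning rate α = 1. Fix λ₀ ∈ Λ and a point w₀* ∈ W with g(λ₀, w₀*) = 0. Let w_0 : Λ → W be the constant function with value w₀*, and define w_{i+1}(λ) = w_i(λ) − g(λ, w_i(λ)). Writing H = H(λ₀, w₀*) and M = M(λ₀, w₀*), for every i the Fréchet derivative of w_{i+1} at λ₀ satisfies D w_{i+1}(λ₀) = −( ∑_{j=0}^{i} (I − H)^j ) ∘ M, where I is the identity map on W and (I − H)^j denotes j-fold composition. -/
open Topology InnerProductSpace ContinuousLinearMap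

theorem neumann_aux {Λ W : Type*}
    [NormedAddCommGroup Λ] [InnerProductSpace ℝ Λ] [CompleteSpace Λ]
    [NormedAddCommGroup W] [InnerProductSpace ℝ W] [CompleteSpace W]
    (LT : Λ × W → ℝ) (hLT : ContDiff ℝ 2 LT)
    (g : Λ → W → W)
    (hg : ∀ l w, g l w = gradient (fun w' => LT (l, w')) w)
    (l₀ : Λ) (wstar : W) (hfix : g l₀ wstar = 0)
    (w : ℕ → Λ → W) (hw0 : w 0 = fun _ => wstar)
    (hrec : ∀ i l, w (i + 1) l = w i l - g l (w i l)) :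
    ∀ i : ℕ,
      fderiv ℝ (w (i + 1)) l₀ =
        -((∑ j ∈ Finset.range (i + 1),
            ((1 : W →L[ℝ] W) - fderiv ℝ (g l₀) wstar) ^ j).comp
          (fderiv ℝ (fun l => g l wstar) l₀)) := by
  set G : Λ × W → W := fun p => g p.1 p.2 with hGdefn
  have hGdef : G = fun p : Λ × W =>
      (toDual ℝ W).symm ((fderiv ℝ LT p).comp (ContinuousLinearMap.inr ℝ Λ W)) := by
    funext p
    obtain ⟨l, w'⟩ := p
    have h1 : HasFDerivAt (LT ∘ fun w'' => (l, w''))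
        ((fderiv ℝ LT (l, w')).comp (ContinuousLinearMap.inr ℝ Λ W)) w' :=
      ((hLT.differentiable two_ne_zero (l, w')).hasFDerivAt).comp w'
        (hasFDerivAt_prodMk_right l w')
    have h1' : fderiv ℝ (fun w'' => LT (l, w'')) w'
        = (fderiv ℝ LT (l, w')).comp (ContinuousLinearMap.inr ℝ Λ W) := h1.fderiv
    simp only [hGdefn, hg, gradient, h1']
  have hGc : ContDiff ℝ 1 G := by
    rw [hGdef]
    have h1 : ContDiff ℝ 1 (fderiv ℝ LT) := hLT.fderiv_right (by norm_num)
    have h2 : ContDiff ℝ 1 (fun p : Λ × W =>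
        (fderiv ℝ LT p).comp (ContinuousLinearMap.inr ℝ Λ W)) :=
      h1.clm_comp contDiff_const
    exact ((toDual ℝ W).symm.contDiff (n := 1)).comp h2
  -- Derivative of G at the fixed point
  have hGd : HasFDerivAt G (fderiv ℝ G (l₀, wstar)) (l₀, wstar) :=
    (hGc.differentiable one_ne_zero (l₀, wstar)).hasFDerivAt
  set DG := fderiv ℝ G (l₀, wstar) with hDG
  set M := fderiv ℝ (fun l => g l wstar) l₀ with hM
  set H := fderiv ℝ (g l₀) wstar with hH
  have hMdef : M = DG.comp (ContinuousLinearMap.inl ℝ Λ W) := by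
    have : HasFDerivAt (G ∘ fun l => (l, wstar))
        (DG.comp (ContinuousLinearMap.inl ℝ Λ W)) l₀ :=
      hGd.comp l₀ (hasFDerivAt_prodMk_left l₀ wstar)
    exact this.fderiv
  have hHdef : H = DG.comp (ContinuousLinearMap.inr ℝ Λ W) := by
    have : HasFDerivAt (G ∘ fun w' => (l₀, w'))
        (DG.comp (ContinuousLinearMap.inr ℝ Λ W)) wstar :=
      hGd.comp wstar (hasFDerivAt_prodMk_right l₀ wstar)
    exact this.fderiv
  set T : W →L[ℝ] W := 1 - H with hT
  -- main induction
  have main : ∀ i : ℕ, w i l₀ = wstar ∧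
      HasFDerivAt (w i) (-((∑ j ∈ Finset.range i, T ^ j).comp M)) l₀ := by
    intro i
    induction i with
    | zero =>
      refine ⟨by rw [hw0], ?_⟩
      simp only [Finset.range_zero, Finset.sum_empty, ContinuousLinearMap.zero_comp, neg_zero]
      rw [hw0]
      exact hasFDerivAt_const wstar l₀
    | succ i ih =>
      obtain ⟨hval, hder⟩ := ih
      have hwfun : w (i + 1) = fun l => w i l - G (l, w i l) := funext fun l => hrec i l
      have hval' : w (i + 1) l₀ = wstar := by
        rw [hwfun]; simp [hval, hGdefn, hfix]
      have hcomp : HasFDerivAt (fun l => G (l, w i l))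
          (DG.comp ((ContinuousLinearMap.id ℝ Λ).prod
            (-((∑ j ∈ Finset.range i, T ^ j).comp M)))) l₀ := by
        have hpair : HasFDerivAt (fun l => (l, w i l))
            ((ContinuousLinearMap.id ℝ Λ).prod
              (-((∑ j ∈ Finset.range i, T ^ j).comp M))) l₀ :=
          HasFDerivAt.prodMk (hasFDerivAt_id l₀) hder
        have hGd' : HasFDerivAt G DG (l₀, w i l₀) := by rw [hval]; exact hGd
        exact hGd'.comp l₀ hpair
      have hder' : HasFDerivAt (w (i + 1))
          (-((∑ j ∈ Finset.range i, T ^ j).comp M)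
            - DG.comp ((ContinuousLinearMap.id ℝ Λ).prod
              (-((∑ j ∈ Finset.range i, T ^ j).comp M)))) l₀ := by
        rw [hwfun]; exact hder.sub hcomp
      refine ⟨hval', ?_⟩
      convert hder' using 1
      -- algebra
      have hsplit : ∀ B : Λ →L[ℝ] W,
          DG.comp ((ContinuousLinearMap.id ℝ Λ).prod B) = M + H.comp B := by
        intro B
        ext u
        have huB : ((u, B u) : Λ × W) = (u, 0) + (0, B u) := by simp
        simp only [ContinuousLinearMap.comp_apply, ContinuousLinearMap.add_apply,
          ContinuousLinearMap.prod_apply, ContinuousLinearMap.coe_id', id_eq, hMdef, hHdef,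
          ContinuousLinearMap.inl_apply, ContinuousLinearMap.inr_apply]
        rw [huB, map_add]
      rw [hsplit]
      set S := ∑ j ∈ Finset.range i, T ^ j with hS
      have hSsucc : ∑ j ∈ Finset.range (i + 1), T ^ j = T * S + 1 := geom_sum_succ
      rw [hSsucc]
      ext u
      simp only [hT, ContinuousLinearMap.neg_apply, ContinuousLinearMap.comp_apply,
        ContinuousLinearMap.add_apply, ContinuousLinearMap.sub_apply,
        ContinuousLinearMap.mul_apply, ContinuousLinearMap.one_apply, map_neg, map_smul]
      abel
  intro i
  exact (main (i + 1)).2.fderiv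

/-- **Neumann-SGD, finite unrolling** (learning rate 1).  Starting unrolled SGD at a fixed
point `w₀*` of the training gradient, the derivative of the `(i+1)`-st iterate at `l₀` is
`D w_{i+1}(l₀) = -(∑_{j=0}^{i} (I - H)^j) ∘ M`. -/
theorem neumann_sgd_finite (m n : ℕ)
    (LT : EuclideanSpace ℝ (Fin m) × EuclideanSpace ℝ (Fin n) → ℝ)
    (hLT : ContDiff ℝ 2 LT)
    (g : EuclideanSpace ℝ (Fin m) → EuclideanSpace ℝ (Fin n) → EuclideanSpace ℝ (Fin n))
    (hg : ∀ l w, g l w = gradient (fun w' => LT (l, w')) w)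
    (l₀ : EuclideanSpace ℝ (Fin m)) (wstar : EuclideanSpace ℝ (Fin n))
    (hfix : g l₀ wstar = 0)
    (w : ℕ → EuclideanSpace ℝ (Fin m) → EuclideanSpace ℝ (Fin n))
    (hw0 : w 0 = fun _ => wstar)
    (hrec : ∀ i l, w (i + 1) l = w i l - g l (w i l)) :
    ∀ i : ℕ,
      fderiv ℝ (w (i + 1)) l₀ =
        -((∑ j ∈ Finset.range (i + 1),
            ((1 : EuclideanSpace ℝ (Fin n) →L[ℝ] EuclideanSpace ℝ (Fin n)) -
              fderiv ℝ (g l₀) wstar) ^ j).comp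
          (fderiv ℝ (fun l => g l wstar) l₀)) :=
  neumann_aux LT hLT g hg l₀ wstar hfix w hw0 hrec
end

section
/- (Neumann-SGD, limit.) Take learning rate α = 1. Fix λ₀ ∈ Λ and a point w₀* ∈ W with g(λ₀, w₀*) = 0. Let w_0 : Λ → W be the constant function with value w₀*, and define w_{i+1}(λ) = w_i(λ) − g(λ, w_i(λ)). Write H = H(λ₀, w₀*) and M = M(λ₀, w₀*). If the operator norm of I − H is strictly less than 1, then H is invertible and the Fréchet derivatives of the iterates at λ₀ converge: lim_{i→∞} D w_{i+1}(λ₀) = −H⁻¹ ∘ M. -/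
open Topology Filter ContinuousLinearMap

set_option maxHeartbeats 1000000 in
/-- **Neumann-SGD, limit** (learning rate 1).  Starting unrolled SGD at a fixed point
`w₀*` of the training gradient, if `‖I - H‖ < 1` then `H` is invertible and
`D w_{i+1}(l₀) → -H⁻¹ ∘ M` as `i → ∞`. -/
theorem neumann_sgd_limit (m n : ℕ)
    (LT : EuclideanSpace ℝ (Fin m) × EuclideanSpace ℝ (Fin n) → ℝ)
    (hLT : ContDiff ℝ 2 LT)
    (g : EuclideanSpace ℝ (Fin m) → EuclideanSpace ℝ (Fin n) → EuclideanSpace ℝ (Fin n))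
    (hg : ∀ l w, g l w = gradient (fun w' => LT (l, w')) w)
    (l₀ : EuclideanSpace ℝ (Fin m)) (wstar : EuclideanSpace ℝ (Fin n))
    (hfix : g l₀ wstar = 0)
    (w : ℕ → EuclideanSpace ℝ (Fin m) → EuclideanSpace ℝ (Fin n))
    (hw0 : w 0 = fun _ => wstar)
    (hrec : ∀ i l, w (i + 1) l = w i l - g l (w i l))
    (hcontr : ‖(1 : EuclideanSpace ℝ (Fin n) →L[ℝ] EuclideanSpace ℝ (Fin n)) -
        fderiv ℝ (g l₀) wstar‖ < 1) :
    IsUnit (fderiv ℝ (g l₀) wstar) ∧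
      Tendsto (fun i => fderiv ℝ (w (i + 1)) l₀) atTop
        (𝓝 (-((Ring.inverse (fderiv ℝ (g l₀) wstar)).comp
          (fderiv ℝ (fun l => g l wstar) l₀)))) := by
  have hgG : ∀ (l : EuclideanSpace ℝ (Fin m)) (w' : EuclideanSpace ℝ (Fin n)),
      g l w' = (InnerProductSpace.toDual ℝ (EuclideanSpace ℝ (Fin n))).symm
      ((fderiv ℝ LT (l, w')).comp (ContinuousLinearMap.inr ℝ _ _)) := by
    intro l w'
    rw [hg]
    unfold gradient
    congr 1
    have h1 : HasFDerivAt LT (fderiv ℝ LT (l, w')) (l, w') :=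
      (hLT.differentiable two_ne_zero (l, w')).hasFDerivAt
    exact (h1.comp w' (hasFDerivAt_prodMk_right l w')).fderiv
  set G : EuclideanSpace ℝ (Fin m) × EuclideanSpace ℝ (Fin n) → EuclideanSpace ℝ (Fin n) :=
    fun p => g p.1 p.2 with hGdef
  have hGsmooth : ContDiff ℝ 1 G := by
    have h1 : ContDiff ℝ 1 (fderiv ℝ LT) := hLT.fderiv_right (le_refl _)
    have h2 : G = (fun q : (EuclideanSpace ℝ (Fin m) × EuclideanSpace ℝ (Fin n)) →L[ℝ] ℝ =>
        (InnerProductSpace.toDual ℝ (EuclideanSpace ℝ (Fin n))).symm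
          (q.comp (ContinuousLinearMap.inr ℝ _ _)))
        ∘ (fderiv ℝ LT) := funext fun p => hgG p.1 p.2
    rw [h2]
    refine ContDiff.comp ?_ h1
    have hc : ContDiff ℝ 1
        (fun q : (EuclideanSpace ℝ (Fin m) × EuclideanSpace ℝ (Fin n)) →L[ℝ] ℝ =>
          q.comp (ContinuousLinearMap.inr ℝ _ _)) :=
      ((ContinuousLinearMap.compL ℝ (EuclideanSpace ℝ (Fin n))
        (EuclideanSpace ℝ (Fin m) × EuclideanSpace ℝ (Fin n)) ℝ).flip
        (ContinuousLinearMap.inr ℝ _ _)).contDiff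
    exact (InnerProductSpace.toDual ℝ (EuclideanSpace ℝ (Fin n))).symm.contDiff.comp hc
  have hGdiff : Differentiable ℝ G := hGsmooth.differentiable one_ne_zero
  set DG := fderiv ℝ G (l₀, wstar) with hDGdef
  have hDG : HasFDerivAt G DG (l₀, wstar) := (hGdiff _).hasFDerivAt
  set H := fderiv ℝ (g l₀) wstar with hHdef
  set M := fderiv ℝ (fun l => g l wstar) l₀ with hMdef
  have hHeq : H = DG.comp (ContinuousLinearMap.inr ℝ _ _) := by
    have h : HasFDerivAt (fun w' : EuclideanSpace ℝ (Fin n) => G (l₀, w'))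
        (DG.comp (ContinuousLinearMap.inr ℝ _ _)) wstar :=
      hDG.comp wstar (hasFDerivAt_prodMk_right l₀ wstar)
    exact h.fderiv
  have hMeq : M = DG.comp (ContinuousLinearMap.inl ℝ _ _) := by
    have h : HasFDerivAt (fun l : EuclideanSpace ℝ (Fin m) => G (l, wstar))
        (DG.comp (ContinuousLinearMap.inl ℝ _ _)) l₀ :=
      by have := hDG.comp l₀ (hasFDerivAt_prodMk_left (𝕜 := ℝ) l₀ wstar); exact this
    exact h.fderiv
  have hfixall : ∀ i, w i l₀ = wstar := by
    intro i
    induction i with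
    | zero => simp [hw0]
    | succ k ih => rw [hrec, ih, hfix, sub_zero]
  set T : EuclideanSpace ℝ (Fin n) →L[ℝ] EuclideanSpace ℝ (Fin n) := 1 - H with hTdef
  have key : ∀ i, HasFDerivAt (w i)
      (-((∑ k ∈ Finset.range i, T ^ k).comp M)) l₀ := by
    intro i
    induction i with
    | zero =>
      simp only [Finset.range_zero, Finset.sum_empty, zero_comp, neg_zero, hw0]
      exact hasFDerivAt_const wstar l₀
    | succ k ih =>
      have hwk : w (k + 1) = fun l => w k l - G (l, w k l) := by
        funext l; exact hrec k l
      rw [hwk]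
      have hDGk : HasFDerivAt G DG (l₀, w k l₀) := by rw [hfixall k]; exact hDG
      set Ak := -((∑ j ∈ Finset.range k, T ^ j).comp M) with hAk
      have hpair : HasFDerivAt (fun l : EuclideanSpace ℝ (Fin m) => (l, w k l))
          ((ContinuousLinearMap.id ℝ _).prod Ak) l₀ :=
        (hasFDerivAt_id l₀).prodMk ih
      have hcomp := hDGk.comp l₀ hpair
      have hsum := ih.sub hcomp
      have hA : DG.comp ((ContinuousLinearMap.id ℝ _).prod Ak) = M + H.comp Ak := by
        ext x
        have hx : ((ContinuousLinearMap.id ℝ _).prod Ak) x = (x, 0) + (0, Ak x) := by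
          simp [Prod.ext_iff]
        rw [ContinuousLinearMap.comp_apply, hx, map_add, hMeq, hHeq]
        simp
      rw [hA] at hsum
      have heq : Ak - (M + H.comp Ak) = -((∑ j ∈ Finset.range (k + 1), T ^ j).comp M) := by
        rw [geom_sum_succ]
        refine ContinuousLinearMap.ext fun x => ?_
        simp only [hAk, hTdef, ContinuousLinearMap.sub_apply, ContinuousLinearMap.add_apply,
          ContinuousLinearMap.neg_apply, ContinuousLinearMap.comp_apply,
          ContinuousLinearMap.mul_apply, ContinuousLinearMap.one_apply, map_neg]
        abel
      rwa [heq] at hsum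
  have hT : ‖T‖ < 1 := hcontr
  have hsum : HasSum (fun i => T ^ i) (Ring.inverse H) := by
    have h := hasSum_geom_series_inverse T hT
    rwa [hTdef, sub_sub_cancel] at h
  have hunit : IsUnit H := by
    have h := isUnit_one_sub_of_norm_lt_one hT
    rwa [hTdef, sub_sub_cancel] at h
  refine ⟨hunit, ?_⟩
  have hfd : ∀ i : ℕ, fderiv ℝ (w (i + 1)) l₀ =
      -((∑ k ∈ Finset.range (i + 1), T ^ k).comp M) := fun i => (key (i + 1)).fderiv
  simp only [hfd]
  have hcont : Continuous (fun S : EuclideanSpace ℝ (Fin n) →L[ℝ] EuclideanSpace ℝ (Fin n) =>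
      -(S.comp M)) := by
    have h : Continuous (fun S : EuclideanSpace ℝ (Fin n) →L[ℝ] EuclideanSpace ℝ (Fin n) =>
        S.comp M) := ((ContinuousLinearMap.compL ℝ (EuclideanSpace ℝ (Fin m))
          (EuclideanSpace ℝ (Fin n)) (EuclideanSpace ℝ (Fin n))).flip M).continuous
    exact h.neg
  have hmain : Tendsto (fun i => -((∑ k ∈ Finset.range i, T ^ k).comp M)) atTop
      (𝓝 (-((Ring.inverse H).comp M))) :=
    (hcont.tendsto _).comp hsum.tendsto_sum_nat
  exact hmain.comp (tendsto_add_atTop_nat 1)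
end

section
/- (Learning-rate-scaled Neumann-SGD, finite unrolling.) Fix a learning rate α > 0, a point λ₀ ∈ Λ, and w₀* ∈ W with g(λ₀, w₀*) = 0. Let w_0 : Λ → W be the constant function with value w₀*, and define w_{i+1}(λ) = w_i(λ) − α·g(λ, w_i(λ)). Writing H = H(λ₀, w₀*) and M = M(λ₀, w₀*), for every i the Fréchet derivative of w_{i+1} at λ₀ satisfies D w_{i+1}(λ₀) = −α·( ∑_{j=0}^{i} (I − α·H)^j ) ∘ M, where I is the identity map on W and (I − α·H)^j denotes j-fold composition. -/
open Topology

/-- **Learning-rate-scaled Neumann-SGD, finite unrolling.**  Starting unrolled SGD with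
learning rate `α > 0` at a fixed point `w₀*` of the training gradient,
`D w_{i+1}(l₀) = -α • (∑_{j=0}^{i} (I - α • H)^j) ∘ M`. -/
theorem neumann_sgd_finite_lr (m n : ℕ)
    (LT : EuclideanSpace ℝ (Fin m) × EuclideanSpace ℝ (Fin n) → ℝ)
    (hLT : ContDiff ℝ 2 LT)
    (g : EuclideanSpace ℝ (Fin m) → EuclideanSpace ℝ (Fin n) → EuclideanSpace ℝ (Fin n))
    (hg : ∀ l w, g l w = gradient (fun w' => LT (l, w')) w)
    (α : ℝ) (hα : 0 < α)
    (l₀ : EuclideanSpace ℝ (Fin m)) (wstar : EuclideanSpace ℝ (Fin n))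
    (hfix : g l₀ wstar = 0)
    (w : ℕ → EuclideanSpace ℝ (Fin m) → EuclideanSpace ℝ (Fin n))
    (hw0 : w 0 = fun _ => wstar)
    (hrec : ∀ i l, w (i + 1) l = w i l - α • g l (w i l)) :
    ∀ i : ℕ,
      fderiv ℝ (w (i + 1)) l₀ =
        -(α • ((∑ j ∈ Finset.range (i + 1),
            ((1 : EuclideanSpace ℝ (Fin n) →L[ℝ] EuclideanSpace ℝ (Fin n)) -
              α • fderiv ℝ (g l₀) wstar) ^ j).comp
          (fderiv ℝ (fun l => g l wstar) l₀))) := by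
  set G : EuclideanSpace ℝ (Fin m) × EuclideanSpace ℝ (Fin n) → EuclideanSpace ℝ (Fin n) :=
    fun p => g p.1 p.2 with hGdef
  have hLTd : Differentiable ℝ LT := hLT.differentiable two_ne_zero
  have hGeq : G = fun p => (InnerProductSpace.toDual ℝ (EuclideanSpace ℝ (Fin n))).symm
      ((fderiv ℝ LT p).comp (ContinuousLinearMap.inr ℝ _ _)) := by
    funext p
    have h1 : HasFDerivAt LT (fderiv ℝ LT p) p := (hLTd p).hasFDerivAt
    have h2 : HasFDerivAt (fun w' : EuclideanSpace ℝ (Fin n) => (p.1, w'))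
        (ContinuousLinearMap.inr ℝ _ _) p.2 := hasFDerivAt_prodMk_right p.1 p.2
    have h3 : HasFDerivAt (fun w' => LT (p.1, w'))
        ((fderiv ℝ LT p).comp (ContinuousLinearMap.inr ℝ _ _)) p.2 := h1.comp p.2 h2
    simp only [hGdef, hg, gradient]
    rw [← h3.fderiv]
  have hG1 : ContDiff ℝ 1 G := by
    rw [hGeq]
    have h3 : ContDiff ℝ 1 (fderiv ℝ LT) := hLT.fderiv_right (by norm_num)
    have h4 : ContDiff ℝ 1 fun p => (fderiv ℝ LT p).comp (ContinuousLinearMap.inr ℝ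
        (EuclideanSpace ℝ (Fin m)) (EuclideanSpace ℝ (Fin n))) := h3.clm_comp contDiff_const
    exact ((InnerProductSpace.toDual ℝ
      (EuclideanSpace ℝ (Fin n))).symm.toContinuousLinearEquiv.toContinuousLinearMap
      |>.contDiff).comp h4
  set DG := fderiv ℝ G (l₀, wstar) with hDG
  have hGd : HasFDerivAt G DG (l₀, wstar) := ((hG1.differentiable one_ne_zero) _).hasFDerivAt
  set H := fderiv ℝ (g l₀) wstar with hHdef
  set M := fderiv ℝ (fun l => g l wstar) l₀ with hMdef
  have hH : H = DG.comp (ContinuousLinearMap.inr ℝ _ _) := by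
    have h5 : HasFDerivAt (g l₀) (DG.comp (ContinuousLinearMap.inr ℝ _ _)) wstar :=
      hGd.comp wstar (hasFDerivAt_prodMk_right l₀ wstar)
    rw [hHdef, h5.fderiv]
  have hM : M = DG.comp (ContinuousLinearMap.inl ℝ _ _) := by
    have h5 : HasFDerivAt (fun l => g l wstar) (DG.comp (ContinuousLinearMap.inl ℝ _ _)) l₀ :=
      by have := hGd.comp l₀ (hasFDerivAt_prodMk_left (𝕜 := ℝ) l₀ wstar); exact this
    rw [hMdef, h5.fderiv]
  set A : EuclideanSpace ℝ (Fin n) →L[ℝ] EuclideanSpace ℝ (Fin n) := 1 - α • H with hA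
  set D : ℕ → (EuclideanSpace ℝ (Fin m) →L[ℝ] EuclideanSpace ℝ (Fin n)) := fun i =>
    -(α • ((∑ j ∈ Finset.range i, A ^ j).comp M)) with hD
  have hsplit : ∀ T : EuclideanSpace ℝ (Fin m) →L[ℝ] EuclideanSpace ℝ (Fin n),
      DG.comp ((ContinuousLinearMap.id ℝ _).prod T) = M + H.comp T := by
    intro T
    refine ContinuousLinearMap.ext fun x => ?_
    rw [hM, hH]
    simp only [ContinuousLinearMap.comp_apply, ContinuousLinearMap.add_apply,
      ContinuousLinearMap.prod_apply, ContinuousLinearMap.id_apply,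
      ContinuousLinearMap.inl_apply, ContinuousLinearMap.inr_apply]
    rw [← map_add]
    simp
  have key : ∀ i, w i l₀ = wstar ∧ HasFDerivAt (w i) (D i) l₀ := by
    intro i
    induction i with
    | zero =>
      refine ⟨by simp [hw0], ?_⟩
      have h0 : D 0 = 0 := by
        refine ContinuousLinearMap.ext fun x => ?_
        simp [hD]
      rw [hw0, h0]
      exact hasFDerivAt_const _ _
    | succ i ih =>
      obtain ⟨hval, hder⟩ := ih
      have hfun : w (i + 1) = fun l => w i l - α • G (l, w i l) := by
        funext l; exact hrec i l
      have hinner : HasFDerivAt (fun l => (l, w i l))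
          ((ContinuousLinearMap.id ℝ _).prod (D i)) l₀ := (hasFDerivAt_id l₀).prodMk hder
      have hGd' : HasFDerivAt G DG (l₀, w i l₀) := by rw [hval]; exact hGd
      have hcomp : HasFDerivAt (fun l => G (l, w i l))
          (DG.comp ((ContinuousLinearMap.id ℝ _).prod (D i))) l₀ := by have := hGd'.comp l₀ hinner; exact this
      have hder' : HasFDerivAt (w (i + 1))
          (D i - α • (DG.comp ((ContinuousLinearMap.id ℝ _).prod (D i)))) l₀ := by
        rw [hfun]; exact hder.sub (hcomp.const_smul α)
      have heq : D i - α • (DG.comp ((ContinuousLinearMap.id ℝ _).prod (D i))) = D (i + 1) := by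
        have hAc : ∀ T : EuclideanSpace ℝ (Fin m) →L[ℝ] EuclideanSpace ℝ (Fin n),
            A.comp T = T - α • H.comp T := by
          intro T
          rw [hA, ContinuousLinearMap.sub_comp, ContinuousLinearMap.smul_comp,
            ContinuousLinearMap.one_def, ContinuousLinearMap.id_comp]
        rw [hsplit, hD]
        simp only
        rw [geom_sum_succ (x := A) (n := i), ContinuousLinearMap.add_comp,
          ContinuousLinearMap.mul_def, ContinuousLinearMap.comp_assoc,
          ContinuousLinearMap.one_def, ContinuousLinearMap.id_comp,
          ContinuousLinearMap.comp_neg, ContinuousLinearMap.comp_smul, hAc]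
        module
      refine ⟨?_, heq ▸ hder'⟩
      rw [hrec, hval, hfix]; simp
  intro i
  rw [((key (i + 1)).2).fderiv]
end

section
/- (Learning-rate-scaled Neumann-SGD, limit.) Fix a learning rate α > 0, a point λ₀ ∈ Λ, and w₀* ∈ W with g(λ₀, w₀*) = 0. Let w_0 : Λ → W be the constant function with value w₀*, and define w_{i+1}(λ) = w_i(λ) − α·g(λ, w_i(λ)). Write H = H(λ₀, w₀*) and M = M(λ₀, w₀*). If the operator norm of I − α·H is strictly less than 1, then H is invertible and lim_{i→∞} D w_{i+1}(λ₀) = −H⁻¹ ∘ M; in particular the limiting derivative of unrolled SGD recovers the implicit function theorem formula −H⁻¹ ∘ M independently of α. -/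
open Topology Filter ContinuousLinearMap InnerProductSpace

set_option maxHeartbeats 1000000 in
set_option synthInstance.maxHeartbeats 400000 in
/-- **Learning-rate-scaled Neumann-SGD, limit.**  Starting unrolled SGD with learning rate
`α > 0` at a fixed point `w₀*` of the training gradient, if `‖I - α • H‖ < 1` then `H` is
invertible and `D w_{i+1}(l₀) → -H⁻¹ ∘ M`, independently of `α`. -/
theorem neumann_sgd_limit_lr (m n : ℕ)
    (LT : EuclideanSpace ℝ (Fin m) × EuclideanSpace ℝ (Fin n) → ℝ)
    (hLT : ContDiff ℝ 2 LT)
    (g : EuclideanSpace ℝ (Fin m) → EuclideanSpace ℝ (Fin n) → EuclideanSpace ℝ (Fin n))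
    (hg : ∀ l w, g l w = gradient (fun w' => LT (l, w')) w)
    (α : ℝ) (hα : 0 < α)
    (l₀ : EuclideanSpace ℝ (Fin m)) (wstar : EuclideanSpace ℝ (Fin n))
    (hfix : g l₀ wstar = 0)
    (w : ℕ → EuclideanSpace ℝ (Fin m) → EuclideanSpace ℝ (Fin n))
    (hw0 : w 0 = fun _ => wstar)
    (hrec : ∀ i l, w (i + 1) l = w i l - α • g l (w i l))
    (hcontr : ‖(1 : EuclideanSpace ℝ (Fin n) →L[ℝ] EuclideanSpace ℝ (Fin n)) -
        α • fderiv ℝ (g l₀) wstar‖ < 1) :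
    IsUnit (fderiv ℝ (g l₀) wstar) ∧
      Tendsto (fun i => fderiv ℝ (w (i + 1)) l₀) atTop
        (𝓝 (-((Ring.inverse (fderiv ℝ (g l₀) wstar)).comp
          (fderiv ℝ (fun l => g l wstar) l₀)))) := by
  set G : (EuclideanSpace ℝ (Fin m)) × (EuclideanSpace ℝ (Fin n)) → (EuclideanSpace ℝ (Fin n)) := fun p => g p.1 p.2 with hGdef
  have hGeq : G = fun p : (EuclideanSpace ℝ (Fin m)) × (EuclideanSpace ℝ (Fin n)) =>
      (toDual ℝ (EuclideanSpace ℝ (Fin n))).symm ((fderiv ℝ LT p).comp (ContinuousLinearMap.inr ℝ (EuclideanSpace ℝ (Fin m)) (EuclideanSpace ℝ (Fin n)))) := by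
    funext p
    have hdiff : HasFDerivAt LT (fderiv ℝ LT p) p :=
      (hLT.differentiable (by norm_num) p).hasFDerivAt
    have h2 : HasFDerivAt (fun w' : (EuclideanSpace ℝ (Fin n)) => LT (p.1, w'))
        ((fderiv ℝ LT p).comp (ContinuousLinearMap.inr ℝ (EuclideanSpace ℝ (Fin m)) (EuclideanSpace ℝ (Fin n)))) p.2 := by
      have := hdiff.comp p.2 (hasFDerivAt_prodMk_right (𝕜 := ℝ) p.1 p.2)
      exact this
    show g p.1 p.2 = _
    rw [hg]
    unfold gradient
    rw [h2.fderiv]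
  have hG : ContDiff ℝ 1 G := by
    rw [hGeq]
    have hf : ContDiff ℝ 1 (fderiv ℝ LT) := hLT.fderiv_right (by norm_num)
    have hclm : ContDiff ℝ 1 (fun A : ((EuclideanSpace ℝ (Fin m)) × (EuclideanSpace ℝ (Fin n))) →L[ℝ] ℝ =>
        (toDual ℝ (EuclideanSpace ℝ (Fin n))).symm (A.comp (ContinuousLinearMap.inr ℝ (EuclideanSpace ℝ (Fin m)) (EuclideanSpace ℝ (Fin n))))) := by
      have : IsBoundedLinearMap ℝ (fun A : ((EuclideanSpace ℝ (Fin m)) × (EuclideanSpace ℝ (Fin n))) →L[ℝ] ℝ =>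
          (toDual ℝ (EuclideanSpace ℝ (Fin n))).symm (A.comp (ContinuousLinearMap.inr ℝ (EuclideanSpace ℝ (Fin m)) (EuclideanSpace ℝ (Fin n))))) :=
        ((toDual ℝ (EuclideanSpace ℝ (Fin n))).symm.toContinuousLinearEquiv.toContinuousLinearMap.comp
          ((ContinuousLinearMap.compL ℝ (EuclideanSpace ℝ (Fin n)) ((EuclideanSpace ℝ (Fin m)) × (EuclideanSpace ℝ (Fin n))) ℝ).flip
            (ContinuousLinearMap.inr ℝ (EuclideanSpace ℝ (Fin m)) (EuclideanSpace ℝ (Fin n))))).isBoundedLinearMap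
      exact this.contDiff
    exact hclm.comp hf
  have hGdiff : Differentiable ℝ G := hG.differentiable (by norm_num)
  set Dg : ((EuclideanSpace ℝ (Fin m)) × (EuclideanSpace ℝ (Fin n))) →L[ℝ] (EuclideanSpace ℝ (Fin n)) := fderiv ℝ G (l₀, wstar) with hDgdef
  set H : (EuclideanSpace ℝ (Fin n)) →L[ℝ] (EuclideanSpace ℝ (Fin n)) := fderiv ℝ (g l₀) wstar with hHdef
  set M : (EuclideanSpace ℝ (Fin m)) →L[ℝ] (EuclideanSpace ℝ (Fin n)) := fderiv ℝ (fun l => g l wstar) l₀ with hMdef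
  have hH : H = Dg.comp (ContinuousLinearMap.inr ℝ (EuclideanSpace ℝ (Fin m)) (EuclideanSpace ℝ (Fin n))) := by
    have h : HasFDerivAt (g l₀) (Dg.comp (ContinuousLinearMap.inr ℝ (EuclideanSpace ℝ (Fin m)) (EuclideanSpace ℝ (Fin n)))) wstar :=
      (hGdiff (l₀, wstar)).hasFDerivAt.comp wstar (hasFDerivAt_prodMk_right (𝕜 := ℝ) l₀ wstar)
    rw [hHdef, h.fderiv]
  have hM : M = Dg.comp (ContinuousLinearMap.inl ℝ (EuclideanSpace ℝ (Fin m)) (EuclideanSpace ℝ (Fin n))) := by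
    have h : HasFDerivAt (fun l => g l wstar) (Dg.comp (ContinuousLinearMap.inl ℝ (EuclideanSpace ℝ (Fin m)) (EuclideanSpace ℝ (Fin n)))) l₀ :=
      by have h0 := (hGdiff (l₀, wstar)).hasFDerivAt.comp l₀ (hasFDerivAt_prodMk_left (𝕜 := ℝ) l₀ wstar); exact h0
    rw [hMdef, h.fderiv]
  have hunit_αH : IsUnit (α • H : (EuclideanSpace ℝ (Fin n)) →L[ℝ] (EuclideanSpace ℝ (Fin n))) := by
    have : (α • H : (EuclideanSpace ℝ (Fin n)) →L[ℝ] (EuclideanSpace ℝ (Fin n))) = 1 - (1 - α • H) := (sub_sub_cancel 1 (α • H)).symm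
    rw [this]; exact (Units.oneSub _ hcontr).isUnit
  have hunitH : IsUnit H := by
    have h1 : IsUnit ((α⁻¹ : ℝ) • (1 : (EuclideanSpace ℝ (Fin n)) →L[ℝ] (EuclideanSpace ℝ (Fin n)))) := by
      refine ⟨⟨(α⁻¹ : ℝ) • (1 : (EuclideanSpace ℝ (Fin n)) →L[ℝ] (EuclideanSpace ℝ (Fin n))), (α : ℝ) • (1 : (EuclideanSpace ℝ (Fin n)) →L[ℝ] (EuclideanSpace ℝ (Fin n))), ?_, ?_⟩, rfl⟩
      · ext x i; simp [smul_smul]; field_simp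
      · ext x i; simp [smul_smul]; field_simp
    have h2 : H = ((α⁻¹ : ℝ) • (1 : (EuclideanSpace ℝ (Fin n)) →L[ℝ] (EuclideanSpace ℝ (Fin n)))) * (α • H) := by
      ext x i; simp [mul_def, smul_smul]; field_simp
    rw [h2]
    exact h1.mul hunit_αH
  refine ⟨hunitH, ?_⟩
  set T : (EuclideanSpace ℝ (Fin n)) →L[ℝ] (EuclideanSpace ℝ (Fin n)) := 1 - α • H with hTdef
  set Dstar : (EuclideanSpace ℝ (Fin m)) →L[ℝ] (EuclideanSpace ℝ (Fin n)) := -(Ring.inverse H).comp M with hDstardef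
  have hHinv : H * Ring.inverse H = 1 := Ring.mul_inverse_cancel H hunitH
  have hHDstar : H.comp Dstar = -M := by
    rw [hDstardef, comp_neg]
    have h3 : H.comp ((Ring.inverse H).comp M) = (H * Ring.inverse H).comp M := rfl
    rw [h3, hHinv, one_def, id_comp]
  have hfixedpt : T.comp Dstar - α • M = Dstar := by
    have h4 : T.comp Dstar = Dstar - α • (H.comp Dstar) := by
      ext x; simp [hTdef, sub_apply, smul_apply]
    rw [h4, hHDstar]
    ext x; simp
  set D : ℕ → ((EuclideanSpace ℝ (Fin m)) →L[ℝ] (EuclideanSpace ℝ (Fin n))) := fun i => Nat.rec 0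
    (fun _ Dp => Dp - α • (Dg.comp ((ContinuousLinearMap.id ℝ (EuclideanSpace ℝ (Fin m))).prod Dp))) i with hDdef
  have hD0 : D 0 = 0 := rfl
  have hDsucc : ∀ i, D (i + 1) = D i - α • (Dg.comp ((ContinuousLinearMap.id ℝ (EuclideanSpace ℝ (Fin m))).prod (D i))) :=
    fun i => rfl
  have hDrec : ∀ i, D (i + 1) = T.comp (D i) - α • M := by
    intro i
    rw [hDsucc i]
    refine ContinuousLinearMap.ext fun x => ?_
    have hsplit : ((x, D i x) : (EuclideanSpace ℝ (Fin m)) × (EuclideanSpace ℝ (Fin n))) = ((x, 0) : (EuclideanSpace ℝ (Fin m)) × (EuclideanSpace ℝ (Fin n))) + ((0, D i x) : (EuclideanSpace ℝ (Fin m)) × (EuclideanSpace ℝ (Fin n))) := by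
      simp
    simp only [sub_apply, smul_apply, comp_apply, prod_apply, coe_id', id_eq,
      hTdef, one_apply]
    rw [hsplit, map_add]
    have h1 : Dg ((x, 0) : (EuclideanSpace ℝ (Fin m)) × (EuclideanSpace ℝ (Fin n))) = M x := by rw [hM]; rfl
    have h2 : Dg ((0, D i x) : (EuclideanSpace ℝ (Fin m)) × (EuclideanSpace ℝ (Fin n))) = H (D i x) := by rw [hH]; rfl
    rw [h1, h2]
    rw [smul_add]
    rw [ContinuousLinearMap.one_apply]
    abel
  have hkey : ∀ i, w i l₀ = wstar ∧ HasFDerivAt (w i) (D i) l₀ := by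
    intro i
    induction i with
    | zero =>
      refine ⟨by rw [hw0], ?_⟩
      rw [hw0, hD0]; exact hasFDerivAt_const wstar l₀
    | succ i ih =>
      obtain ⟨hval, hder⟩ := ih
      have hwip1 : w (i + 1) = fun l => w i l - α • G (l, w i l) := by
        funext l; rw [hrec i l]
      have hGder : HasFDerivAt G Dg (l₀, w i l₀) := by
        rw [hval]; exact (hGdiff (l₀, wstar)).hasFDerivAt
      have hcomp : HasFDerivAt (fun l => G (l, w i l))
          (Dg.comp ((ContinuousLinearMap.id ℝ (EuclideanSpace ℝ (Fin m))).prod (D i))) l₀ :=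
        by have h0 := hGder.comp l₀ ((hasFDerivAt_id (𝕜 := ℝ) l₀).prodMk hder); exact h0
      refine ⟨?_, ?_⟩
      · rw [hrec i l₀, hval, hfix]; simp
      · rw [hwip1, hDsucc i]
        exact hder.sub (hcomp.const_smul α)
  have hdiff2 : ∀ i, D i - Dstar = -((T ^ i).comp Dstar) := by
    intro i
    induction i with
    | zero => simp [hD0, ContinuousLinearMap.one_def, ContinuousLinearMap.id_comp]
    | succ i ih =>
      rw [hDrec i]
      have h5 : T.comp (D i) - α • M - Dstar = T.comp (D i - Dstar) := by
        rw [ContinuousLinearMap.comp_sub]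
        conv_lhs => rw [← hfixedpt]
        abel
      rw [h5, ih]
      ext x
      simp [pow_succ', mul_apply]
  have hnormT : ∀ i x, ‖((T ^ i).comp Dstar) x‖ ≤ ‖T‖ ^ i * ‖Dstar x‖ := by
    intro i
    induction i with
    | zero =>
      intro x
      simp only [pow_zero, one_mul, ContinuousLinearMap.one_def, ContinuousLinearMap.id_comp]
      exact le_rfl
    | succ i ih =>
      intro x
      have h1 : ((T ^ (i + 1)).comp Dstar) x = T (((T ^ i).comp Dstar) x) := by
        rw [pow_succ']; simp [mul_apply]
      rw [h1]
      calc ‖T (((T ^ i).comp Dstar) x)‖ ≤ ‖T‖ * ‖((T ^ i).comp Dstar) x‖ := T.le_opNorm _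
        _ ≤ ‖T‖ * (‖T‖ ^ i * ‖Dstar x‖) :=
            mul_le_mul_of_nonneg_left (ih x) (norm_nonneg T)
        _ = ‖T‖ ^ (i + 1) * ‖Dstar x‖ := by ring
  have hnorm : ∀ i, ‖D i - Dstar‖ ≤ ‖T‖ ^ i * ‖Dstar‖ := by
    intro i
    rw [hdiff2 i, norm_neg]
    refine opNorm_le_bound _ (by positivity) fun x => ?_
    calc ‖((T ^ i).comp Dstar) x‖ ≤ ‖T‖ ^ i * ‖Dstar x‖ := hnormT i x
      _ ≤ ‖T‖ ^ i * (‖Dstar‖ * ‖x‖) :=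
          mul_le_mul_of_nonneg_left (Dstar.le_opNorm x) (by positivity)
      _ = ‖T‖ ^ i * ‖Dstar‖ * ‖x‖ := by ring
  have htend : Tendsto D atTop (𝓝 Dstar) := by
    rw [tendsto_iff_norm_sub_tendsto_zero]
    have hlim : Tendsto (fun i => ‖T‖ ^ i * ‖Dstar‖) atTop (𝓝 0) := by
      have h6 := (tendsto_pow_atTop_nhds_zero_of_lt_one (norm_nonneg T) hcontr).mul_const ‖Dstar‖
      rw [zero_mul] at h6
      exact h6
    exact squeeze_zero (fun i => norm_nonneg _) hnorm hlim
  have heq : (fun i => fderiv ℝ (w (i + 1)) l₀) = fun i => D (i + 1) :=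
    funext fun i => ((hkey (i + 1)).2).fderiv
  rw [heq]
  exact htend.comp (tendsto_add_atTop_nat 1)
end

section
/- (Exact IFT hypergradient.) Suppose w* : Λ → W is differentiable at λ₀, there is a neighborhood U of λ₀ with g(λ, w*(λ)) = 0 for all λ ∈ U, and the training Hessian H = H(λ₀, w*(λ₀)) is an invertible linear map. Let L_V : Λ × W → ℝ be a validation loss differentiable at (λ₀, w*(λ₀)). Then the map L_V* : λ ↦ L_V(λ, w*(λ)) is differentiable at λ₀ with Fréchet derivative D L_V*(λ₀) = ∂_λ L_V(λ₀, w*(λ₀)) − ∂_w L_V(λ₀, w*(λ₀)) ∘ H⁻¹ ∘ M(λ₀, w*(λ₀)), where ∂_λ L_V and ∂_w L_V denote the partial Fréchet derivatives in the first and second arguments. -/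
open Topology

section Aux

variable {𝕜 : Type*} [NontriviallyNormedField 𝕜]
variable {E F X : Type*} [NormedAddCommGroup E] [NormedSpace 𝕜 E]
  [NormedAddCommGroup F] [NormedSpace 𝕜 F] [NormedAddCommGroup X] [NormedSpace 𝕜 X]

lemma comp_prod_decomp (T : (E × F) →L[𝕜] X) (D : E →L[𝕜] F) :
    T.comp ((ContinuousLinearMap.id 𝕜 E).prod D) =
      T.comp (ContinuousLinearMap.inl 𝕜 E F) +
        (T.comp (ContinuousLinearMap.inr 𝕜 E F)).comp D := by
  ext x
  simp only [ContinuousLinearMap.comp_apply, ContinuousLinearMap.prod_apply,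
    ContinuousLinearMap.id_apply, ContinuousLinearMap.add_apply,
    ContinuousLinearMap.inl_apply, ContinuousLinearMap.inr_apply, ← map_add,
    Prod.mk_add_mk, add_zero, zero_add]

lemma fderiv_partial_snd' {φ : E × F → X} {a : E} {b : F}
    (hφ : DifferentiableAt 𝕜 φ (a, b)) :
    fderiv 𝕜 (fun y => φ (a, y)) b =
      (fderiv 𝕜 φ (a, b)).comp (ContinuousLinearMap.inr 𝕜 E F) :=
  (hφ.hasFDerivAt.comp b (hasFDerivAt_prodMk_right a b)).fderiv

lemma fderiv_partial_fst' {φ : E × F → X} {a : E} {b : F}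
    (hφ : DifferentiableAt 𝕜 φ (a, b)) :
    fderiv 𝕜 (fun x => φ (x, b)) a =
      (fderiv 𝕜 φ (a, b)).comp (ContinuousLinearMap.inl 𝕜 E F) :=
  (hφ.hasFDerivAt.comp a (hasFDerivAt_prodMk_left a b)).fderiv

end Aux

/-- **Exact IFT hypergradient.**  If `w*` is differentiable at `l₀`, `g (λ, w* λ) = 0` on a
neighborhood of `l₀`, the training Hessian `H = H(l₀, w* l₀)` is invertible, and the
validation loss `L_V` is differentiable at `(l₀, w* l₀)`, then `L_V*(λ) = L_V(λ, w* λ)` is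
differentiable at `l₀` with
`D L_V*(l₀) = ∂_λ L_V(l₀, w* l₀) - ∂_w L_V(l₀, w* l₀) ∘ H⁻¹ ∘ M(l₀, w* l₀)`. -/
theorem exact_ift_hypergradient (m n : ℕ)
    (LT : EuclideanSpace ℝ (Fin m) × EuclideanSpace ℝ (Fin n) → ℝ)
    (hLT : ContDiff ℝ 2 LT)
    (g : EuclideanSpace ℝ (Fin m) → EuclideanSpace ℝ (Fin n) → EuclideanSpace ℝ (Fin n))
    (hg : ∀ l w, g l w = gradient (fun w' => LT (l, w')) w)
    (wstar : EuclideanSpace ℝ (Fin m) → EuclideanSpace ℝ (Fin n))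
    (l₀ : EuclideanSpace ℝ (Fin m))
    (hdiff : DifferentiableAt ℝ wstar l₀)
    (hfix : ∀ᶠ l in 𝓝 l₀, g l (wstar l) = 0)
    (Hinv : EuclideanSpace ℝ (Fin n) ≃L[ℝ] EuclideanSpace ℝ (Fin n))
    (hH : (Hinv : EuclideanSpace ℝ (Fin n) →L[ℝ] EuclideanSpace ℝ (Fin n)) =
      fderiv ℝ (g l₀) (wstar l₀))
    (LV : EuclideanSpace ℝ (Fin m) × EuclideanSpace ℝ (Fin n) → ℝ)
    (hLV : DifferentiableAt ℝ LV (l₀, wstar l₀)) :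
    DifferentiableAt ℝ (fun l => LV (l, wstar l)) l₀ ∧
      fderiv ℝ (fun l => LV (l, wstar l)) l₀ =
        fderiv ℝ (fun l => LV (l, wstar l₀)) l₀ -
          (fderiv ℝ (fun v => LV (l₀, v)) (wstar l₀)).comp
            ((Hinv.symm : EuclideanSpace ℝ (Fin n) →L[ℝ] EuclideanSpace ℝ (Fin n)).comp
              (fderiv ℝ (fun l => g l (wstar l₀)) l₀)) := by
  -- g as a function of the pair
  have hgfun : ∀ l w, g l w = (InnerProductSpace.toDual ℝ (EuclideanSpace ℝ (Fin n))).symm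
      ((fderiv ℝ LT (l, w)).comp
        (ContinuousLinearMap.inr ℝ (EuclideanSpace ℝ (Fin m)) (EuclideanSpace ℝ (Fin n)))) := by
    intro l w
    rw [hg, gradient]
    congr 1
    exact (((hLT.differentiable (by norm_num)) (l, w)).hasFDerivAt.comp w
      (hasFDerivAt_prodMk_right l w)).fderiv
  have hGdiff : Differentiable ℝ
      (fun p : EuclideanSpace ℝ (Fin m) × EuclideanSpace ℝ (Fin n) => g p.1 p.2) := by
    have h1 : ContDiff ℝ 1 (fderiv ℝ LT) := hLT.fderiv_right (by norm_num)
    have h2 : ContDiff ℝ 1 (fun p : EuclideanSpace ℝ (Fin m) × EuclideanSpace ℝ (Fin n) =>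
        (InnerProductSpace.toDual ℝ (EuclideanSpace ℝ (Fin n))).symm
          ((fderiv ℝ LT p).comp
            (ContinuousLinearMap.inr ℝ (EuclideanSpace ℝ (Fin m)) (EuclideanSpace ℝ (Fin n))))) := by
      apply (InnerProductSpace.toDual ℝ (EuclideanSpace ℝ (Fin n))).symm.contDiff.comp
      exact (((ContinuousLinearMap.compL ℝ (EuclideanSpace ℝ (Fin n))
        (EuclideanSpace ℝ (Fin m) × EuclideanSpace ℝ (Fin n)) ℝ).flip
        (ContinuousLinearMap.inr ℝ (EuclideanSpace ℝ (Fin m))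
          (EuclideanSpace ℝ (Fin n)))).contDiff).comp h1
    have heq : (fun p : EuclideanSpace ℝ (Fin m) × EuclideanSpace ℝ (Fin n) => g p.1 p.2) =
        fun p => (InnerProductSpace.toDual ℝ (EuclideanSpace ℝ (Fin n))).symm
          ((fderiv ℝ LT p).comp
            (ContinuousLinearMap.inr ℝ (EuclideanSpace ℝ (Fin m)) (EuclideanSpace ℝ (Fin n)))) := by
      funext p; exact hgfun p.1 p.2
    rw [heq]
    exact h2.differentiable one_ne_zero
  have hGd : DifferentiableAt ℝ
      (fun p : EuclideanSpace ℝ (Fin m) × EuclideanSpace ℝ (Fin n) => g p.1 p.2)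
      (l₀, wstar l₀) := hGdiff _
  set DG := fderiv ℝ
    (fun p : EuclideanSpace ℝ (Fin m) × EuclideanSpace ℝ (Fin n) => g p.1 p.2)
    (l₀, wstar l₀) with hDG
  set Dw := fderiv ℝ wstar l₀ with hDw
  have hinner : HasFDerivAt (fun l => (l, wstar l))
      ((ContinuousLinearMap.id ℝ (EuclideanSpace ℝ (Fin m))).prod Dw) l₀ :=
    (hasFDerivAt_id l₀).prodMk hdiff.hasFDerivAt
  have hF : HasFDerivAt (fun l => g l (wstar l))
      (DG.comp ((ContinuousLinearMap.id ℝ (EuclideanSpace ℝ (Fin m))).prod Dw)) l₀ :=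
    (hGd.hasFDerivAt.comp l₀ hinner :)
  have hF0 : HasFDerivAt (fun l => g l (wstar l))
      (0 : EuclideanSpace ℝ (Fin m) →L[ℝ] EuclideanSpace ℝ (Fin n)) l₀ :=
    (hasFDerivAt_const (0 : EuclideanSpace ℝ (Fin n)) l₀).congr_of_eventuallyEq hfix
  have hzero : DG.comp ((ContinuousLinearMap.id ℝ (EuclideanSpace ℝ (Fin m))).prod Dw) = 0 :=
    hF.unique hF0
  rw [comp_prod_decomp] at hzero
  have hHpart : fderiv ℝ (g l₀) (wstar l₀) =
      DG.comp (ContinuousLinearMap.inr ℝ (EuclideanSpace ℝ (Fin m)) (EuclideanSpace ℝ (Fin n))) :=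
    fderiv_partial_snd' hGd
  have hMpart : fderiv ℝ (fun l => g l (wstar l₀)) l₀ =
      DG.comp (ContinuousLinearMap.inl ℝ (EuclideanSpace ℝ (Fin m)) (EuclideanSpace ℝ (Fin n))) :=
    fderiv_partial_fst' hGd
  have hHeq : (Hinv : EuclideanSpace ℝ (Fin n) →L[ℝ] EuclideanSpace ℝ (Fin n)) =
      DG.comp (ContinuousLinearMap.inr ℝ (EuclideanSpace ℝ (Fin m)) (EuclideanSpace ℝ (Fin n))) :=
    hH.trans hHpart
  have hDweq : Dw = -((Hinv.symm : EuclideanSpace ℝ (Fin n) →L[ℝ] EuclideanSpace ℝ (Fin n)).comp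
      (fderiv ℝ (fun l => g l (wstar l₀)) l₀)) := by
    rw [hMpart]
    have h1 : DG.comp (ContinuousLinearMap.inl ℝ (EuclideanSpace ℝ (Fin m))
        (EuclideanSpace ℝ (Fin n))) =
        -((Hinv : EuclideanSpace ℝ (Fin n) →L[ℝ] EuclideanSpace ℝ (Fin n)).comp Dw) := by
      rw [hHeq]
      exact eq_neg_of_add_eq_zero_left hzero
    rw [h1]
    ext x
    simp
  have hLVchain : HasFDerivAt (fun l => LV (l, wstar l))
      ((fderiv ℝ LV (l₀, wstar l₀)).comp
        ((ContinuousLinearMap.id ℝ (EuclideanSpace ℝ (Fin m))).prod Dw)) l₀ :=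
    hLV.hasFDerivAt.comp l₀ hinner
  refine ⟨hLVchain.differentiableAt, ?_⟩
  rw [hLVchain.fderiv, comp_prod_decomp, fderiv_partial_fst' hLV, fderiv_partial_snd' hLV,
    hDweq, ContinuousLinearMap.comp_neg, ← sub_eq_add_neg]
end
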